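/- Let λ₁ ≤ λ₂ be positive reals. Then the Poisson distribution with parameter λ₁ conditioned to be nonzero is stochastically dominated by the Poisson distribution with parameter λ₂ conditioned to be nonzero; that is, for every k ≥ 1, P[Z̄_{λ₁} ≥ k] ≤ P[Z̄_{λ₂} ≥ k]. -/

import Mathlib

/-- The probability mass function of a Poisson distribution with parameter `a`
conditioned to be nonzero. -/
noncomputable def condPoissonPMF (a : ℝ) (k : ℕ) : ℝ :=
  if k = 0 then 0 else (Real.exp (-a) * a ^ k / k.factorial) / (1 - Real.exp (-a))

namespace CondPoissonAux

open Finset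

lemma exp_eq_tsum' (x : ℝ) : Real.exp x = ∑' n : ℕ, x ^ n / n.factorial := by
  rw [Real.exp_eq_exp_ℝ, NormedSpace.exp_eq_tsum_div]

/-- Taylor polynomial of exp. -/
noncomputable def S (k : ℕ) (x : ℝ) : ℝ := ∑ j ∈ Finset.range k, x ^ j / j.factorial

/-- exp x minus taylor polynomial is the tail tsum. -/
lemma exp_sub_S (k : ℕ) (x : ℝ) :
    Real.exp x - S k x = ∑' i : ℕ, x ^ (i + k) / (i + k).factorial := by
  have hsum := Real.summable_pow_div_factorial x
  have h := Summable.sum_add_tsum_nat_add (f := fun n => x ^ n / n.factorial) k hsum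
  rw [exp_eq_tsum', ← h, S]
  ring

lemma fact_le (m i : ℕ) : (m.factorial * i.factorial : ℝ) ≤ ((m + i).factorial : ℝ) := by
  have := Nat.factorial_mul_factorial_dvd_factorial_add m i
  exact_mod_cast Nat.le_of_dvd (Nat.factorial_pos _) this

/-- Key inequality: tail at m is at most exp x * x^m / m!. -/
lemma tail_le (m : ℕ) (x : ℝ) (hx : 0 ≤ x) :
    Real.exp x - S m x ≤ Real.exp x * x ^ m / m.factorial := by
  rw [exp_sub_S]
  have h1 : Real.exp x * x ^ m / m.factorial
      = ∑' i : ℕ, (x ^ i / i.factorial) * (x ^ m / m.factorial) := by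
    rw [tsum_mul_right, ← exp_eq_tsum']
    ring
  rw [h1]
  have hsum1 : Summable (fun i : ℕ => x ^ (i + m) / ((i + m).factorial : ℝ)) := by
    exact (summable_nat_add_iff m).2 (Real.summable_pow_div_factorial x)
  have hsum2 : Summable (fun i : ℕ => (x ^ i / (i.factorial : ℝ)) * (x ^ m / m.factorial)) :=
    (Real.summable_pow_div_factorial x).mul_right _
  refine Summable.tsum_le_tsum (fun i => ?_) hsum1 hsum2
  have hxp : (0:ℝ) ≤ x ^ (i + m) := pow_nonneg hx _
  have h2 : (x ^ i / (i.factorial : ℝ)) * (x ^ m / m.factorial)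
      = x ^ (i + m) / (i.factorial * m.factorial : ℝ) := by
    rw [pow_add]; ring
  rw [h2]
  have hpos : (0:ℝ) < (i.factorial * m.factorial : ℝ) := by positivity
  apply div_le_div_of_nonneg_left hxp hpos
  have := fact_le i m
  calc ((i + m).factorial : ℝ) ≥ (i.factorial * m.factorial : ℝ) := this
    _ = _ := rfl

/-- The conditioned tail function. -/
noncomputable def f (k : ℕ) (x : ℝ) : ℝ := (Real.exp x - S k x) / (Real.exp x - 1)

lemma hasDerivAt_S (k : ℕ) (x : ℝ) :
    HasDerivAt (S k) (∑ j ∈ Finset.range k, (j : ℝ) * x ^ (j - 1) / j.factorial) x := by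
  have : HasDerivAt (fun y => ∑ j ∈ Finset.range k, y ^ j / (j.factorial : ℝ))
      (∑ j ∈ Finset.range k, (j : ℝ) * x ^ (j - 1) / j.factorial) x := by
    apply HasDerivAt.fun_sum
    intro j _
    simpa [div_eq_mul_inv] using (hasDerivAt_pow j x).mul_const ((j.factorial : ℝ)⁻¹)
  exact this

lemma deriv_S_eq (m : ℕ) (x : ℝ) :
    (∑ j ∈ Finset.range (m + 1), (j : ℝ) * x ^ (j - 1) / j.factorial) = S m x := by
  rw [Finset.sum_range_succ']
  simp only [Nat.cast_zero, zero_mul, zero_div, add_zero, S]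
  apply Finset.sum_congr rfl
  intro i _
  have : ((i + 1).factorial : ℝ) = (i + 1) * i.factorial := by
    push_cast [Nat.factorial_succ]; ring
  rw [this]
  have hi : ((i:ℝ) + 1) ≠ 0 := by positivity
  field_simp
  rw [Nat.add_sub_cancel]; push_cast; ring

lemma hasDerivAt_f (m : ℕ) (x : ℝ) (hx : 0 < x) :
    HasDerivAt (f (m + 1))
      (((Real.exp x - S m x) * (Real.exp x - 1) - (Real.exp x - S (m+1) x) * Real.exp x)
        / (Real.exp x - 1) ^ 2) x := by
  have hden : (1:ℝ) < Real.exp x := by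
    rw [← Real.exp_zero]; exact Real.exp_lt_exp.2 hx
  have hne : Real.exp x - 1 ≠ 0 := by linarith
  have hnum : HasDerivAt (fun y => Real.exp y - S (m+1) y) (Real.exp x - S m x) x := by
    have := (Real.hasDerivAt_exp x).sub (hasDerivAt_S (m+1) x)
    rwa [deriv_S_eq] at this
  have hd : HasDerivAt (fun y => Real.exp y - 1) (Real.exp x) x := by
    simpa using (Real.hasDerivAt_exp x).sub_const 1
  exact hnum.div hd hne

lemma f_monotoneOn (m : ℕ) : MonotoneOn (f (m + 1)) (Set.Ioi 0) := by
  have hdiff : ∀ x ∈ Set.Ioi (0:ℝ), HasDerivAt (f (m+1))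
      (((Real.exp x - S m x) * (Real.exp x - 1) - (Real.exp x - S (m+1) x) * Real.exp x)
        / (Real.exp x - 1) ^ 2) x := fun x hx => hasDerivAt_f m x hx
  apply monotoneOn_of_deriv_nonneg (convex_Ioi 0)
  · intro x hx
    exact ((hdiff x hx).differentiableAt).continuousAt.continuousWithinAt
  · rw [interior_Ioi]
    intro x hx
    exact ((hdiff x hx).differentiableAt).differentiableWithinAt
  · rw [interior_Ioi]
    intro x hx
    rw [(hdiff x hx).deriv]
    have hx' : (0:ℝ) < x := hx
    have hden : (1:ℝ) < Real.exp x := by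
      rw [← Real.exp_zero]; exact Real.exp_lt_exp.2 hx'
    have hS : S (m+1) x = S m x + x ^ m / m.factorial := by
      rw [S, S, Finset.sum_range_succ]
    have hN : (Real.exp x - S m x) * (Real.exp x - 1) - (Real.exp x - S (m+1) x) * Real.exp x
        = Real.exp x * x ^ m / m.factorial - (Real.exp x - S m x) := by
      rw [hS]; ring
    have htail := tail_le m x hx'.le
    apply div_nonneg
    · rw [hN]; linarith
    · positivity

/-- The tail sum equals f. -/
lemma tsum_eq_f (l : ℝ) (hl : 0 < l) (k : ℕ) (hk : 1 ≤ k) :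
    (∑' j : ℕ, if k ≤ j then condPoissonPMF l j else 0) = f k l := by
  have hexpneg : Real.exp (-l) < 1 := by
    rw [Real.exp_lt_one_iff]; linarith
  have hne1 : (1 : ℝ) - Real.exp (-l) ≠ 0 := by linarith
  have hfun : (fun j : ℕ => if k ≤ j then condPoissonPMF l j else 0)
      = fun j : ℕ => (Real.exp (-l) / (1 - Real.exp (-l))) *
          (if k ≤ j then l ^ j / j.factorial else 0) := by
    funext j
    by_cases h : k ≤ j
    · have hj : j ≠ 0 := by omega
      simp only [h, if_true, condPoissonPMF, hj, if_false]
      ring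
    · simp [h]
  rw [hfun, tsum_mul_left]
  have hsumh : Summable (fun j : ℕ => if k ≤ j then l ^ j / (j.factorial : ℝ) else 0) := by
    apply Summable.of_nonneg_of_le (fun j => ?_) (fun j => ?_)
        (Real.summable_pow_div_factorial l)
    · by_cases h : k ≤ j <;> simp [h] <;> positivity
    · by_cases h : k ≤ j <;> simp [h] <;> positivity
  have htail : (∑' j : ℕ, if k ≤ j then l ^ j / (j.factorial : ℝ) else 0)
      = Real.exp l - S k l := by
    have h := Summable.sum_add_tsum_nat_add
      (f := fun j : ℕ => if k ≤ j then l ^ j / (j.factorial : ℝ) else 0) k hsumh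
    have hzero : (∑ j ∈ Finset.range k,
        if k ≤ j then l ^ j / (j.factorial : ℝ) else 0) = 0 := by
      apply Finset.sum_eq_zero
      intro j hj
      rw [Finset.mem_range] at hj
      simp [Nat.not_le.2 hj]
    have hsimp : (fun i : ℕ => if k ≤ i + k then l ^ (i + k) / ((i + k).factorial : ℝ) else 0)
        = fun i : ℕ => l ^ (i + k) / ((i + k).factorial : ℝ) := by
      funext i; simp
    rw [hzero, zero_add, hsimp] at h
    rw [← h, exp_sub_S]
  rw [htail, f]
  have hexpne : Real.exp l ≠ 0 := Real.exp_ne_zero l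
  have hgt : (1:ℝ) < Real.exp l := by
    rw [← Real.exp_zero]; exact Real.exp_lt_exp.2 hl
  have hne2 : Real.exp l - 1 ≠ 0 := by linarith
  have hkey : Real.exp (-l) / (1 - Real.exp (-l)) = 1 / (Real.exp l - 1) := by
    rw [Real.exp_neg]
    field_simp
  rw [hkey]
  ring

end CondPoissonAux

theorem stmt_4 (l₁ l₂ : ℝ) (h₁ : 0 < l₁) (h₁₂ : l₁ ≤ l₂) :
    ∀ k : ℕ, 1 ≤ k →
      (∑' j : ℕ, if k ≤ j then condPoissonPMF l₁ j else 0) ≤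
      (∑' j : ℕ, if k ≤ j then condPoissonPMF l₂ j else 0) := by
  intro k hk
  have h₂ : 0 < l₂ := lt_of_lt_of_le h₁ h₁₂
  rw [CondPoissonAux.tsum_eq_f l₁ h₁ k hk, CondPoissonAux.tsum_eq_f l₂ h₂ k hk]
  obtain ⟨m, rfl⟩ : ∃ m, k = m + 1 := ⟨k - 1, by omega⟩
  exact CondPoissonAux.f_monotoneOn m h₁ h₂ h₁₂
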